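/- Bound Hypothesis Property: if t is a normal simply typed λ-term (with types built from atoms, ⊥, ∧, →; term formers: variables, λ-abstraction, application, pairing, projections, and ex-falso applied to atomic types) with free variables x₁:A₁,…,xₙ:Aₙ and t : A, and z : B is a variable occurring bound in t, then either B is a proper subformula of a prime factor of A, or B is a strong subformula of one of A₁,…,Aₙ. -/

import Mathlib

/-- Formulas built from atoms, ⊥, ∧ and →. -/
inductive Form where
  | atom : ℕ → Form
  | bot  : Form
  | conj : Form → Form → Form
  | imp  : Form → Form → Form
deriving DecidableEq

/-- The subformula relation. -/
inductive Subform : Form → Form → Prop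
  | refl (A) : Subform A A
  | conjL : Subform B A₁ → Subform B (Form.conj A₁ A₂)
  | conjR : Subform B A₂ → Subform B (Form.conj A₁ A₂)
  | impL : Subform B A₁ → Subform B (Form.imp A₁ A₂)
  | impR : Subform B A₂ → Subform B (Form.imp A₁ A₂)

/-- Proper subformula: a subformula distinct from the whole formula. -/
def ProperSub (B A : Form) : Prop := Subform B A ∧ B ≠ A

/-- A formula is prime if it is not a conjunction. -/
def PrimeForm (A : Form) : Prop := ∀ X Y, A ≠ Form.conj X Y

/-- The prime factors of a formula: split top-level conjunctions recursively. -/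
def primeFactors : Form → List Form
  | Form.conj A B => primeFactors A ++ primeFactors B
  | A => [A]

/-- B is a strong subformula of A if B is a proper subformula of some prime
proper subformula of A. -/
def StrongSub (B A : Form) : Prop :=
  ∃ C, PrimeForm C ∧ ProperSub C A ∧ ProperSub B C

/-- Simply typed λ-terms with named variables: variables, λ-abstraction,
application, pairing, projections, and ex falso (targeting atomic types). -/
inductive Tm where
  | var : ℕ → Tm
  | lam : ℕ → Form → Tm → Tm
  | app : Tm → Tm → Tm
  | pair : Tm → Tm → Tm
  | proj : Bool → Tm → Tm
  | efq : ℕ → Tm → Tm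
deriving DecidableEq

/-- Free variables of a term. -/
def FV : Tm → Set ℕ
  | .var x => {x}
  | .lam x _ u => FV u \ {x}
  | .app u w => FV u ∪ FV w
  | .pair u v => FV u ∪ FV v
  | .proj _ u => FV u
  | .efq _ u => FV u

def upd (Γ : ℕ → Option Form) (x : ℕ) (A : Form) : ℕ → Option Form :=
  fun y => if y = x then some A else Γ y

/-- Typing judgment for the simply typed λ-calculus. -/
inductive Typed : (ℕ → Option Form) → Tm → Form → Prop
  | var : Γ x = some A → Typed Γ (.var x) A
  | lam : Typed (upd Γ x A) u B → Typed Γ (.lam x A u) (.imp A B)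
  | app : Typed Γ u (.imp A B) → Typed Γ w A → Typed Γ (.app u w) B
  | pair : Typed Γ u A → Typed Γ v B → Typed Γ (.pair u v) (.conj A B)
  | projL : Typed Γ u (.conj A B) → Typed Γ (.proj false u) A
  | projR : Typed Γ u (.conj A B) → Typed Γ (.proj true u) B
  | efq : Typed Γ u .bot → Typed Γ (.efq n u) (.atom n)

def IsLam : Tm → Prop
  | .lam _ _ _ => True
  | _ => False

def IsPair : Tm → Prop
  | .pair _ _ => True
  | _ => False

/-- A term is normal if it contains no β-redex and no projection redex. -/
def NormalTm : Tm → Prop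
  | .var _ => True
  | .lam _ _ u => NormalTm u
  | .app u w => NormalTm u ∧ NormalTm w ∧ ¬ IsLam u
  | .pair u v => NormalTm u ∧ NormalTm v
  | .proj _ u => NormalTm u ∧ ¬ IsPair u
  | .efq _ u => NormalTm u

/-- The subterm relation. -/
inductive Subterm : Tm → Tm → Prop
  | refl (t) : Subterm t t
  | lam : Subterm s u → Subterm s (.lam x A u)
  | appL : Subterm s u → Subterm s (.app u w)
  | appR : Subterm s w → Subterm s (.app u w)
  | pairL : Subterm s u → Subterm s (.pair u v)
  | pairR : Subterm s v → Subterm s (.pair u v)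
  | proj : Subterm s u → Subterm s (.proj b u)
  | efq : Subterm s u → Subterm s (.efq n u)

/-- A variable of type B occurs bound in t: some λ-abstraction in t binds a
variable of type B which actually occurs in its body. -/
def BoundOcc (B : Form) (t : Tm) : Prop :=
  ∃ x u, Subterm (.lam x B u) t ∧ x ∈ FV u

/-! ### Auxiliary development -/

def fsize : Form → ℕ
  | .atom _ => 1
  | .bot => 1
  | .conj a b => fsize a + fsize b + 1
  | .imp a b => fsize a + fsize b + 1

lemma fsize_pos (A : Form) : 0 < fsize A := by
  cases A <;> simp [fsize]

lemma subform_size {B A : Form} (h : Subform B A) : fsize B ≤ fsize A := by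
  induction h <;> simp [fsize] at * <;> omega

lemma ne_of_size {B A : Form} (h : fsize B < fsize A) : B ≠ A := by
  rintro rfl; omega

lemma subform_trans {A B C : Form} (h1 : Subform A B) (h2 : Subform B C) :
    Subform A C := by
  induction h2 with
  | refl => exact h1
  | conjL _ ih => exact .conjL ih
  | conjR _ ih => exact .conjR ih
  | impL _ ih => exact .impL ih
  | impR _ ih => exact .impR ih

lemma primeFactors_mem {P A : Form} (h : P ∈ primeFactors A) :
    PrimeForm P ∧ Subform P A := by
  induction A with
  | conj A₁ A₂ ih1 ih2 =>
    simp only [primeFactors, List.mem_append] at h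
    rcases h with h | h
    · exact ⟨(ih1 h).1, .conjL (ih1 h).2⟩
    · exact ⟨(ih2 h).1, .conjR (ih2 h).2⟩
  | atom n =>
    simp [primeFactors] at h
    subst h
    exact ⟨fun X Y h => Form.noConfusion h, .refl _⟩
  | bot =>
    simp [primeFactors] at h
    subst h
    exact ⟨fun X Y h => Form.noConfusion h, .refl _⟩
  | imp A₁ A₂ _ _ =>
    simp [primeFactors] at h
    subst h
    exact ⟨fun X Y h => Form.noConfusion h, .refl _⟩

lemma subform_bot {B : Form} (h : Subform B .bot) : B = .bot := by
  cases h; rfl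

def Neutral : Tm → Prop
  | .var _ => True
  | .app _ _ => True
  | .proj _ _ => True
  | _ => False

lemma boundOcc_var {B : Form} {x : ℕ} (h : BoundOcc B (.var x)) : False := by
  obtain ⟨_, _, hs, _⟩ := h; cases hs

lemma boundOcc_lam {B C : Form} {x : ℕ} {u : Tm} (h : BoundOcc B (.lam x C u)) :
    (B = C ∧ x ∈ FV u) ∨ BoundOcc B u := by
  obtain ⟨y, v, hs, hy⟩ := h
  cases hs with
  | refl => exact Or.inl ⟨rfl, hy⟩
  | lam h => exact Or.inr ⟨y, v, h, hy⟩

lemma boundOcc_app {B : Form} {u w : Tm} (h : BoundOcc B (.app u w)) :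
    BoundOcc B u ∨ BoundOcc B w := by
  obtain ⟨y, v, hs, hy⟩ := h
  cases hs with
  | appL h => exact Or.inl ⟨y, v, h, hy⟩
  | appR h => exact Or.inr ⟨y, v, h, hy⟩

lemma boundOcc_pair {B : Form} {u w : Tm} (h : BoundOcc B (.pair u w)) :
    BoundOcc B u ∨ BoundOcc B w := by
  obtain ⟨y, v, hs, hy⟩ := h
  cases hs with
  | pairL h => exact Or.inl ⟨y, v, h, hy⟩
  | pairR h => exact Or.inr ⟨y, v, h, hy⟩

lemma boundOcc_proj {B : Form} {b : Bool} {u : Tm} (h : BoundOcc B (.proj b u)) :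
    BoundOcc B u := by
  obtain ⟨y, v, hs, hy⟩ := h
  cases hs with
  | proj h => exact ⟨y, v, h, hy⟩

lemma boundOcc_efq {B : Form} {n : ℕ} {u : Tm} (h : BoundOcc B (.efq n u)) :
    BoundOcc B u := by
  obtain ⟨y, v, hs, hy⟩ := h
  cases hs with
  | efq h => exact ⟨y, v, h, hy⟩

lemma neutral_of_imp {Γ : ℕ → Option Form} {u : Tm} {A₁ A₂ : Form}
    (h : Typed Γ u (.imp A₁ A₂)) (hl : ¬ IsLam u) : Neutral u := by
  cases u <;> first
    | trivial
    | exact absurd trivial hl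
    | cases h

lemma neutral_of_conj {Γ : ℕ → Option Form} {u : Tm} {A₁ A₂ : Form}
    (h : Typed Γ u (.conj A₁ A₂)) (hp : ¬ IsPair u) : Neutral u := by
  cases u <;> first
    | trivial
    | exact absurd trivial hp
    | cases h

theorem bhp_combined (t : Tm) : ∀ (Γ : ℕ → Option Form) (A : Form),
    Typed Γ t A → NormalTm t →
    ((Neutral t →
        (∃ x C, x ∈ FV t ∧ Γ x = some C ∧ Subform A C) ∧
        (∀ B, BoundOcc B t → ∃ y ∈ FV t, ∃ D, Γ y = some D ∧ StrongSub B D)) ∧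
     (∀ B, BoundOcc B t →
        (∃ P ∈ primeFactors A, ProperSub B P) ∨
        (∃ y ∈ FV t, ∃ D, Γ y = some D ∧ StrongSub B D))) := by
  induction t with
  | var x =>
    intro Γ A ht _
    cases ht with
    | var hΓ =>
      refine ⟨fun _ => ⟨⟨x, A, rfl, hΓ, .refl A⟩, fun B hB => absurd hB boundOcc_var⟩,
        fun B hB => absurd hB boundOcc_var⟩
  | lam x C u ih =>
    intro Γ A ht hnf
    cases ht with
    | @lam _ _ _ _ D hu =>
      refine ⟨fun hn => hn.elim, fun B hB => ?_⟩
      rcases boundOcc_lam hB with ⟨rfl, _⟩ | hBu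
      · refine Or.inl ⟨.imp B D, by simp [primeFactors], .impL (.refl B), ?_⟩
        exact ne_of_size (by simp [fsize])
      · rcases (ih _ _ hu hnf).2 B hBu with ⟨P, hPmem, hBP, hne⟩ | ⟨y, hy, D', hΓy, hS⟩
        · refine Or.inl ⟨.imp C D, by simp [primeFactors],
            subform_trans hBP (.impR (primeFactors_mem hPmem).2), ?_⟩
          have h1 := subform_size hBP
          have h2 := subform_size (primeFactors_mem hPmem).2
          exact ne_of_size (by simp [fsize]; have := fsize_pos C; omega)
        · by_cases hyx : y = x
          · subst hyx
            simp only [upd, if_true, eq_self_iff_true, if_pos, Option.some.injEq] at hΓy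
            subst hΓy
            obtain ⟨E, _, ⟨hEC, _⟩, hBE, _⟩ := hS
            refine Or.inl ⟨.imp C D, by simp [primeFactors],
              subform_trans (subform_trans hBE hEC) (.impL (.refl C)), ?_⟩
            have h1 := subform_size hBE
            have h2 := subform_size hEC
            exact ne_of_size (by simp [fsize]; have := fsize_pos D; omega)
          · refine Or.inr ⟨y, ⟨hy, hyx⟩, D', ?_, hS⟩
            simpa [upd, hyx] using hΓy
  | app u w ihu ihw =>
    intro Γ A ht hnf
    obtain ⟨hnu, hnw, hnl⟩ := hnf
    cases ht with
    | @app _ _ A' _ _ hu hw =>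
      have hneu : Neutral u := neutral_of_imp hu hnl
      obtain ⟨⟨x, C, hxFV, hΓx, hsub⟩, hbu⟩ := (ihu Γ _ hu hnu).1 hneu
      have key : (Neutral (Tm.app u w) →
          (∃ x C, x ∈ FV (Tm.app u w) ∧ Γ x = some C ∧ Subform A C) ∧
          (∀ B, BoundOcc B (Tm.app u w) →
            ∃ y ∈ FV (Tm.app u w), ∃ D, Γ y = some D ∧ StrongSub B D)) := by
        intro _
        refine ⟨⟨x, C, Or.inl hxFV, hΓx, subform_trans (.impR (.refl A)) hsub⟩,
          fun B hB => ?_⟩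
        rcases boundOcc_app hB with hBu | hBw
        · obtain ⟨y, hy, D, hΓy, hS⟩ := hbu B hBu
          exact ⟨y, Or.inl hy, D, hΓy, hS⟩
        · rcases (ihw Γ A' hw hnw).2 B hBw with ⟨P, hPmem, hBP⟩ | ⟨y, hy, D, hΓy, hS⟩
          · obtain ⟨hPpr, hPsub⟩ := primeFactors_mem hPmem
            refine ⟨x, Or.inl hxFV, C, hΓx,
              ⟨P, hPpr, ⟨subform_trans (.impL hPsub) hsub, ?_⟩, hBP⟩⟩
            have h1 := subform_size hPsub
            have h2 := subform_size hsub
            have h3 : fsize (Form.imp A' A) = fsize A' + fsize A + 1 := rfl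
            exact ne_of_size (by have := fsize_pos A; omega)
          · exact ⟨y, Or.inr hy, D, hΓy, hS⟩
      exact ⟨key, fun B hB => Or.inr ((key trivial).2 B hB)⟩
  | pair u w ihu ihw =>
    intro Γ A ht hnf
    obtain ⟨hnu, hnw⟩ := hnf
    cases ht with
    | pair hu hw =>
      refine ⟨fun hn => hn.elim, fun B hB => ?_⟩
      rcases boundOcc_pair hB with hBu | hBw
      · rcases (ihu _ _ hu hnu).2 B hBu with ⟨P, hPmem, hBP⟩ | ⟨y, hy, D, hΓy, hS⟩
        · exact Or.inl ⟨P, by simp [primeFactors, List.mem_append]; exact Or.inl hPmem, hBP⟩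
        · exact Or.inr ⟨y, Or.inl hy, D, hΓy, hS⟩
      · rcases (ihw _ _ hw hnw).2 B hBw with ⟨P, hPmem, hBP⟩ | ⟨y, hy, D, hΓy, hS⟩
        · exact Or.inl ⟨P, by simp [primeFactors, List.mem_append]; exact Or.inr hPmem, hBP⟩
        · exact Or.inr ⟨y, Or.inr hy, D, hΓy, hS⟩
  | proj b u ihu =>
    intro Γ A ht hnf
    obtain ⟨hnu, hnp⟩ := hnf
    have main : ∀ A₁ A₂, Typed Γ u (.conj A₁ A₂) → Subform A (.conj A₁ A₂) →
        (Neutral (Tm.proj b u) →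
          (∃ x C, x ∈ FV (Tm.proj b u) ∧ Γ x = some C ∧ Subform A C) ∧
          (∀ B, BoundOcc B (Tm.proj b u) →
            ∃ y ∈ FV (Tm.proj b u), ∃ D, Γ y = some D ∧ StrongSub B D)) := by
      intro A₁ A₂ hu hAsub _
      have hneu : Neutral u := neutral_of_conj hu hnp
      obtain ⟨⟨x, C, hxFV, hΓx, hsub⟩, hbu⟩ := (ihu Γ _ hu hnu).1 hneu
      refine ⟨⟨x, C, hxFV, hΓx, subform_trans hAsub hsub⟩, fun B hB => ?_⟩
      exact hbu B (boundOcc_proj hB)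
    cases ht with
    | projL hu =>
      have key := main _ _ hu (.conjL (.refl A))
      exact ⟨key, fun B hB => Or.inr ((key trivial).2 B hB)⟩
    | projR hu =>
      have key := main _ _ hu (.conjR (.refl A))
      exact ⟨key, fun B hB => Or.inr ((key trivial).2 B hB)⟩
  | efq n u ihu =>
    intro Γ A ht hnf
    cases ht with
    | efq hu =>
      refine ⟨fun hn => hn.elim, fun B hB => ?_⟩
      rcases (ihu _ _ hu hnf).2 B (boundOcc_efq hB) with ⟨P, hPmem, hBP, hne⟩ | ⟨y, hy, D, hΓy, hS⟩
      · simp [primeFactors] at hPmem; subst hPmem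
        exact absurd (subform_bot hBP) hne
      · exact Or.inr ⟨y, hy, D, hΓy, hS⟩

/-- Bound Hypothesis Property: in a normal simply typed λ-term t : A with free
variables typed by Γ, the type B of any bound variable occurring in t is a
proper subformula of a prime factor of A, or a strong subformula of the type
of one of the free variables of t. -/
theorem bound_hypothesis_property (Γ : ℕ → Option Form) (t : Tm) (A B : Form)
    (ht : Typed Γ t A) (hnf : NormalTm t) (hB : BoundOcc B t) :
    (∃ P ∈ primeFactors A, ProperSub B P) ∨
    (∃ x ∈ FV t, ∃ D, Γ x = some D ∧ StrongSub B D) := by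
  exact (bhp_combined t Γ A ht hnf).2 B hB
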